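/- arXiv:1810.12335 — 4 statements merged into one kernel-verified Lean document; each statement's English description precedes it below -/
import Mathlib

section
/- Let d_A, d_R be positive natural numbers and let ρ be a complex positive semidefinite matrix indexed by (Fin d_A) × (Fin d_R) with trace 1, satisfying the energy constraint ∑_{(n,r)} (n : ℝ) · Re(ρ (n,r) (n,r)) ≤ E for some E > 0. Let M be a natural number with E < M + 1, let Π be the diagonal projector onto the index pairs (n,r) with n ≤ M, and let ρ^M = (Π ρ Π) / Tr(Π ρ Π) be the normalized truncation of ρ. Then (1/2) · ∑_i |λ_i(ρ − ρ^M)| ≤ √(E/(M+1)), where λ_i(ρ − ρ^M) are the eigenvalues of the Hermitian matrix ρ − ρ^M (so the left-hand side is half the trace norm of ρ − ρ^M). -/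
open scoped ComplexOrder
open Matrix

private lemma trace_cs {ι : Type*} [Fintype ι] (X Y : Matrix ι ι ℂ) :
    ((Xᴴ * Y).trace).re ≤ Real.sqrt ((Xᴴ * X).trace).re * Real.sqrt ((Yᴴ * Y).trace).re := by
  have key : ∀ Z W : Matrix ι ι ℂ,
      ((Zᴴ * W).trace).re = ∑ p : ι × ι, ((starRingEnd ℂ) (Z p.2 p.1) * W p.2 p.1).re := by
    intro Z W
    rw [Matrix.trace]
    simp only [Matrix.diag, Matrix.mul_apply, Matrix.conjTranspose_apply, Complex.re_sum,
      Fintype.sum_prod_type]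
    simp only [Complex.star_def]
  have habs : ∀ Z : Matrix ι ι ℂ,
      ((Zᴴ * Z).trace).re = ∑ p : ι × ι, ‖Z p.2 p.1‖ ^ 2 := by
    intro Z
    rw [key]
    refine Finset.sum_congr rfl fun p _ => ?_
    rw [mul_comm, Complex.mul_conj]
    rw [Complex.normSq_eq_norm_sq, Complex.ofReal_re]
  calc ((Xᴴ * Y).trace).re
      = ∑ p : ι × ι, ((starRingEnd ℂ) (X p.2 p.1) * Y p.2 p.1).re := key X Y
    _ ≤ ∑ p : ι × ι, ‖X p.2 p.1‖ * ‖Y p.2 p.1‖ := by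
        refine Finset.sum_le_sum fun p _ => ?_
        refine (Complex.re_le_norm _).trans_eq ?_
        rw [norm_mul, Complex.norm_conj]
    _ ≤ Real.sqrt (∑ p : ι × ι, ‖X p.2 p.1‖ ^ 2) *
        Real.sqrt (∑ p : ι × ι, ‖Y p.2 p.1‖ ^ 2) :=
        Real.sum_mul_le_sqrt_mul_sqrt _ _ _
    _ = _ := by rw [habs X, habs Y]

set_option maxHeartbeats 1000000

/-- Finite-dimensional rendering of Proposition 1: a bipartite density matrix
with mean photon number at most `E` on the `A` system is within trace distance
`2 * √(E/(M+1))` of its normalized truncation to photon numbers at most `M`. -/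
theorem truncation_trace_distance_bound
    (d_A d_R : ℕ) (hdA : 0 < d_A) (hdR : 0 < d_R)
    (ρ : Matrix (Fin d_A × Fin d_R) (Fin d_A × Fin d_R) ℂ)
    (hρ : ρ.PosSemidef) (htr : ρ.trace = 1)
    (E : ℝ) (hE : 0 < E)
    (henergy : ∑ x : Fin d_A × Fin d_R, ((x.1 : ℕ) : ℝ) * (ρ x x).re ≤ E)
    (M : ℕ) (hM : E < M + 1)
    (P : Matrix (Fin d_A × Fin d_R) (Fin d_A × Fin d_R) ℂ)
    (hP : P = Matrix.diagonal (fun x => if (x.1 : ℕ) ≤ M then 1 else 0))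
    (ρM : Matrix (Fin d_A × Fin d_R) (Fin d_A × Fin d_R) ℂ)
    (hρM : ρM = ((P * ρ * P).trace)⁻¹ • (P * ρ * P))
    (hherm : (ρ - ρM).IsHermitian) :
    (1/2 : ℝ) * ∑ i, |hherm.eigenvalues i| ≤ Real.sqrt (E / (M + 1)) := by
  classical
  -- diagonal entries of a PSD matrix
  have hdiag0 : ∀ x, (0:ℂ) ≤ ρ x x := by
    intro x
    exact hρ.diag_nonneg
  have hdre : ∀ x, 0 ≤ (ρ x x).re := by
    intro x
    simpa using (Complex.le_def.mp (hdiag0 x)).1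
  have hdim : ∀ x, (ρ x x).im = 0 := by
    intro x
    simpa using (Complex.le_def.mp (hdiag0 x)).2.symm
  have hdiagC : ∀ x, ρ x x = ((ρ x x).re : ℂ) := by
    intro x
    exact Complex.ext (by simp) (by simp [hdim x])
  set p : ℝ := ∑ x : Fin d_A × Fin d_R, (if (x.1:ℕ) ≤ M then (ρ x x).re else 0) with hp_def
  set ε : ℝ := ∑ x : Fin d_A × Fin d_R, (if (x.1:ℕ) ≤ M then 0 else (ρ x x).re) with hε_def
  have htr_re : ∑ x, (ρ x x).re = 1 := by
    have h := congrArg Complex.re htr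
    rw [Matrix.trace] at h
    simpa [Matrix.diag, Complex.re_sum] using h
  have hpε : p + ε = 1 := by
    rw [hp_def, hε_def, ← Finset.sum_add_distrib]
    rw [Finset.sum_congr rfl (fun x _ => by split <;> simp : ∀ x ∈ Finset.univ,
      (if (x.1:ℕ) ≤ M then (ρ x x).re else 0) + (if (x.1:ℕ) ≤ M then 0 else (ρ x x).re)
        = (ρ x x).re)]
    exact htr_re
  have hε0 : 0 ≤ ε := by
    refine Finset.sum_nonneg fun x _ => ?_
    split
    · exact le_refl 0
    · exact hdre x
  have hp0 : 0 ≤ p := by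
    refine Finset.sum_nonneg fun x _ => ?_
    split
    · exact hdre x
    · exact le_refl 0
  have hM1 : (0:ℝ) < (M:ℝ) + 1 := by positivity
  have hMark : ε * ((M:ℝ)+1) ≤ E := by
    calc ε * ((M:ℝ)+1)
        = ∑ x : Fin d_A × Fin d_R, (if (x.1:ℕ) ≤ M then 0 else (ρ x x).re) * ((M:ℝ)+1) :=
          Finset.sum_mul _ _ _
      _ ≤ ∑ x : Fin d_A × Fin d_R, ((x.1 : ℕ) : ℝ) * (ρ x x).re := by
          refine Finset.sum_le_sum fun x _ => ?_
          by_cases h : (x.1:ℕ) ≤ M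
          · simp only [h, if_true, zero_mul]
            exact mul_nonneg (by positivity) (hdre x)
          · simp only [h, if_false]
            push_neg at h
            have h' : (M:ℝ) + 1 ≤ ((x.1:ℕ):ℝ) := by exact_mod_cast h
            nlinarith [hdre x]
      _ ≤ E := henergy
  have hεE : ε ≤ E / ((M:ℝ)+1) := (le_div_iff₀ hM1).mpr hMark
  have hεlt1 : ε < 1 := lt_of_le_of_lt hεE (by rw [div_lt_one hM1]; exact hM)
  have hppos : 0 < p := by linarith
  have hp1 : p ≤ 1 := by linarith
  -- trace identities for the projector
  have htrPρP : (P * ρ * P).trace = (p : ℂ) := by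
    have hentry : ∀ x : Fin d_A × Fin d_R, (P * ρ * P) x x
        = (if (x.1:ℕ) ≤ M then (((ρ x x).re : ℝ) : ℂ) else 0) := by
      intro x
      rw [hP, Matrix.mul_diagonal, Matrix.diagonal_mul]
      by_cases h : (x.1:ℕ) ≤ M
      · simpa [h] using hdiagC x
      · simp [h]
    rw [Matrix.trace]
    simp only [Matrix.diag]
    rw [Finset.sum_congr rfl fun x _ => hentry x, hp_def, Complex.ofReal_sum]
    refine Finset.sum_congr rfl fun x _ => ?_
    split <;> simp
  have htrPρ : (P * ρ).trace = (p : ℂ) := by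
    have hentry : ∀ x : Fin d_A × Fin d_R, (P * ρ) x x
        = (if (x.1:ℕ) ≤ M then (((ρ x x).re : ℝ) : ℂ) else 0) := by
      intro x
      rw [hP, Matrix.diagonal_mul]
      by_cases h : (x.1:ℕ) ≤ M
      · simpa [h] using hdiagC x
      · simp [h]
    rw [Matrix.trace]
    simp only [Matrix.diag]
    rw [Finset.sum_congr rfl fun x _ => hentry x, hp_def, Complex.ofReal_sum]
    refine Finset.sum_congr rfl fun x _ => ?_
    split <;> simp
  have hPH : Pᴴ = P := by
    rw [hP, Matrix.diagonal_conjTranspose]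
    refine congrArg Matrix.diagonal ?_
    funext x
    by_cases h : (x.1:ℕ) ≤ M <;> simp [Pi.star_apply, h]
  have hPP : P * P = P := by
    rw [hP, Matrix.diagonal_mul_diagonal]
    refine congrArg Matrix.diagonal ?_
    funext x
    by_cases h : (x.1:ℕ) ≤ M <;> simp [h]
  -- square root of ρ
  set W : Matrix (Fin d_A × Fin d_R) (Fin d_A × Fin d_R) ℂ := (open scoped MatrixOrder in CFC.sqrt ρ) with hWdef
  have hWmul : W * W = ρ := by open scoped MatrixOrder in (rw [← pow_two]; exact CFC.sq_sqrt ρ hρ.nonneg)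
  have hWH : Wᴴ = W := (open scoped MatrixOrder in (CFC.sqrt_nonneg ρ).posSemidef.1)
  -- the sign matrix C
  set U : Matrix (Fin d_A × Fin d_R) (Fin d_A × Fin d_R) ℂ := ↑hherm.eigenvectorUnitary with hUdef
  set g : (Fin d_A × Fin d_R) → ℝ := hherm.eigenvalues with hgdef
  set s : (Fin d_A × Fin d_R) → ℂ := fun i => if 0 ≤ g i then (1:ℂ) else -1 with hsdef
  set C : Matrix (Fin d_A × Fin d_R) (Fin d_A × Fin d_R) ℂ :=
    U * Matrix.diagonal s * star U with hCdef
  have hUU : star U * U = 1 := Matrix.UnitaryGroup.star_mul_self _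
  have hUU' : U * star U = 1 := by
    have := hherm.eigenvectorUnitary.2
    exact (Unitary.mem_iff.mp this).2
  have hspec : ρ - ρM = U * Matrix.diagonal (fun i => ((g i : ℝ) : ℂ)) * star U :=
    hherm.spectral_theorem
  have hDH : (Matrix.diagonal s)ᴴ = Matrix.diagonal s := by
    rw [Matrix.diagonal_conjTranspose]
    refine congrArg Matrix.diagonal ?_
    funext i
    by_cases h : 0 ≤ g i <;> simp [Pi.star_apply, hsdef, h]
  have hCH : Cᴴ = C := by
    rw [hCdef, Matrix.conjTranspose_mul, Matrix.conjTranspose_mul, hDH,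
      Matrix.star_eq_conjTranspose, Matrix.conjTranspose_conjTranspose, Matrix.mul_assoc]
  have hCC : C * C = 1 := by
    rw [hCdef]
    calc U * Matrix.diagonal s * star U * (U * Matrix.diagonal s * star U)
        = U * (Matrix.diagonal s * (star U * U) * Matrix.diagonal s) * star U := by
          simp only [Matrix.mul_assoc]
      _ = U * (Matrix.diagonal s * Matrix.diagonal s) * star U := by rw [hUU]; simp
      _ = U * star U := by
          rw [Matrix.diagonal_mul_diagonal]
          have : (Matrix.diagonal fun i => s i * s i) = 1 := by
            have : (fun i => s i * s i) = fun _ => (1:ℂ) := by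
              funext i
              by_cases h : 0 ≤ g i <;> simp [hsdef, h]
            rw [this, Matrix.diagonal_one]
          rw [this]
          simp
      _ = 1 := hUU'
  have htrdC : ((ρ - ρM) * C).trace = ((∑ i, |g i| : ℝ) : ℂ) := by
    rw [hspec, hCdef]
    calc (U * Matrix.diagonal (fun i => ((g i : ℝ) : ℂ)) * star U *
          (U * Matrix.diagonal s * star U)).trace
        = (U * (Matrix.diagonal (fun i => ((g i : ℝ) : ℂ)) * Matrix.diagonal s) * star U).trace := by
          rw [show U * Matrix.diagonal (fun i => ((g i : ℝ) : ℂ)) * star U *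
              (U * Matrix.diagonal s * star U)
            = U * (Matrix.diagonal (fun i => ((g i : ℝ) : ℂ)) * ((star U * U) * Matrix.diagonal s))
              * star U by simp only [Matrix.mul_assoc], hUU]
          simp [Matrix.mul_assoc]
      _ = ((star U * U) * (Matrix.diagonal (fun i => ((g i : ℝ) : ℂ)) * Matrix.diagonal s)).trace := by
          rw [Matrix.trace_mul_cycle]
      _ = (Matrix.diagonal (fun i => ((g i : ℝ) : ℂ)) * Matrix.diagonal s).trace := by
          rw [hUU, one_mul]
      _ = ((∑ i, |g i| : ℝ) : ℂ) := by
          rw [Matrix.diagonal_mul_diagonal, Matrix.trace_diagonal]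
          push_cast
          refine Finset.sum_congr rfl fun i _ => ?_
          by_cases h : 0 ≤ g i
          · simp [hsdef, h, abs_of_nonneg h]
          · push_neg at h
            simp [hsdef, not_le.mpr h, abs_of_neg h]
  -- constants
  set c : ℝ := (Real.sqrt p)⁻¹ with hcdef
  have hsppos : 0 < Real.sqrt p := Real.sqrt_pos.mpr hppos
  have hcp : c * p = Real.sqrt p := by
    rw [hcdef]
    rw [show p = Real.sqrt p * Real.sqrt p from (Real.mul_self_sqrt hp0).symm]
    field_simp
    rw [Real.sqrt_sq hsppos.le]
  have hccp : c * c = p⁻¹ := by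
    rw [hcdef, ← Real.sqrt_inv]
    exact Real.mul_self_sqrt (by positivity)
  have hc2p : (c * c) * p = 1 := by
    rw [hccp]
    field_simp
  set A : Matrix (Fin d_A × Fin d_R) (Fin d_A × Fin d_R) ℂ := W - (c:ℂ) • (P * W) with hAdef
  set B : Matrix (Fin d_A × Fin d_R) (Fin d_A × Fin d_R) ℂ := W + (c:ℂ) • (P * W) with hBdef
  have hAH : Aᴴ = W - (c:ℂ) • (W * P) := by
    rw [hAdef, Matrix.conjTranspose_sub, Matrix.conjTranspose_smul,
      Matrix.conjTranspose_mul, hWH, hPH, Complex.star_def, Complex.conj_ofReal]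
  -- trace facts
  have F1 : (W * (C * W)).trace = (ρ * C).trace := by
    rw [← Matrix.mul_assoc, Matrix.trace_mul_comm, ← Matrix.mul_assoc, hWmul]
  have F2 : (W * (P * (C * W))).trace = star ((W * (C * (P * W))).trace) := by
    have em : (W * (C * (P * W)))ᴴ = W * (P * (C * W)) := by
      simp only [Matrix.conjTranspose_mul, hWH, hPH, hCH, Matrix.mul_assoc]
    rw [← em, Matrix.trace_conjTranspose]
  have F3 : (W * (P * (C * (P * W)))).trace = ((P * ρ * P) * C).trace := by
    have e1 : W * (P * (C * (P * W))) = W * ((P * (C * P)) * W) := by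
      simp only [Matrix.mul_assoc]
    rw [e1, Matrix.trace_mul_comm]
    have e2 : (P * (C * P)) * W * W = (P * C) * (P * ρ) := by
      rw [Matrix.mul_assoc (P * (C * P)) W W, hWmul]
      simp only [Matrix.mul_assoc]
    rw [e2, Matrix.trace_mul_comm]
    have e4 : (P * ρ) * (P * C) = (P * ρ * P) * C := by simp only [Matrix.mul_assoc]
    rw [e4]
  have G1 : (W * W).trace = 1 := by rw [hWmul, htr]
  have G2 : (W * (P * W)).trace = (p:ℂ) := by
    rw [Matrix.trace_mul_comm, Matrix.mul_assoc, hWmul]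
    exact htrPρ
  have G4 : (W * (P * (P * W))).trace = (p:ℂ) := by
    rw [show W * (P * (P * W)) = W * ((P * P) * W) by simp only [Matrix.mul_assoc], hPP]
    exact G2
  -- expansions
  have expandA : Aᴴ * A = W * W - (c:ℂ) • (W * (P * W)) - (c:ℂ) • (W * (P * W))
      + ((c:ℂ)*(c:ℂ)) • (W * (P * (P * W))) := by
    rw [hAH, hAdef]
    simp only [Matrix.sub_mul, Matrix.mul_sub, Matrix.smul_mul, Matrix.mul_smul, smul_smul,
      smul_sub, smul_add, Matrix.mul_assoc]
    abel
  have expandB : Bᴴ * B = W * W + (c:ℂ) • (W * (P * W)) + (c:ℂ) • (W * (P * W))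
      + ((c:ℂ)*(c:ℂ)) • (W * (P * (P * W))) := by
    have hBH : Bᴴ = W + (c:ℂ) • (W * P) := by
      rw [hBdef, Matrix.conjTranspose_add, Matrix.conjTranspose_smul,
        Matrix.conjTranspose_mul, hWH, hPH, Complex.star_def, Complex.conj_ofReal]
    rw [hBH, hBdef]
    simp only [Matrix.add_mul, Matrix.mul_add, Matrix.smul_mul, Matrix.mul_smul, smul_smul,
      smul_sub, smul_add, Matrix.mul_assoc]
    abel
  have expandACB : Aᴴ * (C * B) = W * (C * W) + (c:ℂ) • (W * (C * (P * W)))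
      - (c:ℂ) • (W * (P * (C * W))) - ((c:ℂ)*(c:ℂ)) • (W * (P * (C * (P * W)))) := by
    rw [hAH, hBdef]
    simp only [Matrix.mul_add, Matrix.add_mul, Matrix.sub_mul, Matrix.mul_sub,
      Matrix.mul_smul, Matrix.smul_mul, smul_smul, Matrix.mul_assoc, smul_sub, smul_add]
    abel
  set t2 : ℂ := (W * (C * (P * W))).trace with ht2
  set T4 : ℂ := ((P * ρ * P) * C).trace with hT4
  have hLHS : (Aᴴ * (C * B)).trace
      = (ρ * C).trace + (c:ℂ) * (t2 - star t2) - ((c:ℂ)*(c:ℂ)) * T4 := by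
    rw [expandACB]
    simp only [Matrix.trace_add, Matrix.trace_sub, Matrix.trace_smul]
    rw [F1, F2, F3]
    rw [ht2, hT4]
    simp only [smul_eq_mul]
    ring
  have hRHS : ((ρ - ρM) * C).trace = (ρ * C).trace - ((p:ℂ))⁻¹ * T4 := by
    rw [Matrix.sub_mul, Matrix.trace_sub, hρM, htrPρP, Matrix.smul_mul, Matrix.trace_smul,
      smul_eq_mul, hT4]
  have hre : (Aᴴ * (C * B)).trace.re = ((ρ - ρM) * C).trace.re := by
    rw [hLHS, hRHS]
    have h1 : ((c:ℂ) * (t2 - star t2)).re = 0 := by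
      simp [Complex.star_def, Complex.mul_re, Complex.sub_re, Complex.sub_im,
        Complex.conj_re, Complex.conj_im]
    have h2 : ((c:ℂ)*(c:ℂ)) * T4 = ((p:ℂ))⁻¹ * T4 := by
      rw [← Complex.ofReal_mul, hccp, Complex.ofReal_inv]
    rw [h2, Complex.sub_re, Complex.sub_re, Complex.add_re, h1]
    ring
  -- norm computations
  have hTA : (Aᴴ * A).trace.re = 2 - 2*Real.sqrt p := by
    rw [expandA]
    simp only [Matrix.trace_add, Matrix.trace_sub, Matrix.trace_smul]
    rw [G1, G2, G4]
    simp only [smul_eq_mul]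
    rw [show ((c:ℂ)*(c:ℂ))*((p:ℝ):ℂ) = (((c*c)*p : ℝ) : ℂ) by push_cast; ring, hc2p]
    rw [show (c:ℂ)*((p:ℝ):ℂ) = ((c*p : ℝ) : ℂ) by push_cast; ring, hcp]
    simp [Complex.sub_re, Complex.add_re, Complex.ofReal_re]
    ring
  have hTB : (Bᴴ * B).trace.re = 2 + 2*Real.sqrt p := by
    rw [expandB]
    simp only [Matrix.trace_add, Matrix.trace_smul]
    rw [G1, G2, G4]
    simp only [smul_eq_mul]
    rw [show ((c:ℂ)*(c:ℂ))*((p:ℝ):ℂ) = (((c*c)*p : ℝ) : ℂ) by push_cast; ring, hc2p]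
    rw [show (c:ℂ)*((p:ℝ):ℂ) = ((c*p : ℝ) : ℂ) by push_cast; ring, hcp]
    simp [Complex.add_re, Complex.ofReal_re]
    ring
  have hCB : (C * B)ᴴ * (C * B) = Bᴴ * B := by
    rw [Matrix.conjTranspose_mul, hCH, Matrix.mul_assoc, ← Matrix.mul_assoc C C B, hCC,
      Matrix.one_mul]
  -- put it together
  have hsqp1 : Real.sqrt p ≤ 1 := by
    rw [show (1:ℝ) = Real.sqrt 1 by simp]
    exact Real.sqrt_le_sqrt hp1
  have hmain : (∑ i, |g i|) ≤ 2 * Real.sqrt ε := by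
    have hcs := trace_cs A (C * B)
    rw [hCB, hre, hTA, hTB] at hcs
    have hsum : ((ρ - ρM) * C).trace.re = ∑ i, |g i| := by
      rw [htrdC, Complex.ofReal_re]
    rw [hsum] at hcs
    refine hcs.trans ?_
    rw [← Real.sqrt_mul (by linarith : (0:ℝ) ≤ 2 - 2*Real.sqrt p)]
    have h4 : (2 - 2*Real.sqrt p) * (2 + 2*Real.sqrt p) = 4 * ε := by
      have hss := Real.mul_self_sqrt hp0
      nlinarith
    rw [h4, show (4:ℝ)*ε = (2:ℝ)^2 * ε by ring, Real.sqrt_mul (by positivity),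
      Real.sqrt_sq (by norm_num : (0:ℝ) ≤ 2)]
  calc (1/2:ℝ) * ∑ i, |g i| ≤ Real.sqrt ε := by linarith [Real.sqrt_nonneg ε]
    _ ≤ Real.sqrt (E / ((M:ℝ)+1)) := Real.sqrt_le_sqrt hεE
end

section
/- For η ∈ [0, 1) and δ ∈ ℂ, the coherent vectors satisfy |⟪c(√η · δ), c(δ)⟫|² = exp(−|δ|² (1 − √η)²); consequently, for fixed η < 1, this quantity tends to 0 as |δ| → ∞. -/
/-- The coherent state vector `c(α) ∈ ℓ²(ℕ, ℂ)`, whose `n`-th Fock-basis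
coefficient is `exp(−|α|²/2) · αⁿ / √(n!)`. -/
noncomputable def coherent (α : ℂ) : lp (fun _ : ℕ => ℂ) 2 :=
  ⟨fun n => Complex.exp (-((‖α‖ ^ 2 : ℝ) : ℂ) / 2) * α ^ n /
      (Real.sqrt (Nat.factorial n) : ℂ), by
    apply memℓp_gen
    have hs : Summable (fun n : ℕ =>
        (Real.exp (-‖α‖ ^ 2 / 2)) ^ 2 * ((‖α‖ ^ 2) ^ n / (Nat.factorial n))) := by
      exact (Real.summable_pow_div_factorial _).mul_left _
    apply hs.congr
    intro n
    have hfac : (0 : ℝ) < Real.sqrt (Nat.factorial n) := by positivity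
    have h2 : (2 : ENNReal).toReal = ((2 : ℕ) : ℝ) := by norm_num
    rw [h2, Real.rpow_natCast]
    simp only [norm_div, norm_mul]
    rw [Complex.norm_exp]
    have hre : (-((‖α‖ ^ 2 : ℝ) : ℂ) / 2).re = -‖α‖ ^ 2 / 2 := by
      simp [← Complex.ofReal_pow]
    rw [hre, norm_pow, Complex.norm_real, Real.norm_eq_abs, abs_of_pos hfac, eq_comm, div_pow, mul_pow,
      Real.sq_sqrt (Nat.cast_nonneg _)]
    ring⟩

lemma coherent_inner (β δ : ℂ) :
    (inner ℂ (coherent β) (coherent δ) : ℂ) =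
      Complex.exp (-((‖β‖ ^ 2 : ℝ) : ℂ) / 2) *
        Complex.exp (-((‖δ‖ ^ 2 : ℝ) : ℂ) / 2) *
        Complex.exp ((starRingEnd ℂ) β * δ) := by
  rw [lp.inner_eq_tsum]
  have hterm : ∀ n : ℕ, (inner ℂ ((coherent β) n) ((coherent δ) n) : ℂ) =
      Complex.exp (-((‖β‖ ^ 2 : ℝ) : ℂ) / 2) *
        Complex.exp (-((‖δ‖ ^ 2 : ℝ) : ℂ) / 2) *
        (((starRingEnd ℂ) β * δ) ^ n / (Nat.factorial n)) := by
    intro n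
    have hfc : ((Real.sqrt (Nat.factorial n) : ℂ)) * ((Real.sqrt (Nat.factorial n) : ℂ)) =
        ((Nat.factorial n : ℝ) : ℂ) := by
      rw [← Complex.ofReal_mul, Real.mul_self_sqrt (Nat.cast_nonneg _)]
    have hconjA : (starRingEnd ℂ) (Complex.exp (-((‖β‖ ^ 2 : ℝ) : ℂ) / 2)) =
        Complex.exp (-((‖β‖ ^ 2 : ℝ) : ℂ) / 2) := by
      rw [← Complex.exp_conj]
      congr 1
      simp [map_div₀, Complex.conj_ofReal, ← Complex.ofReal_pow, map_ofNat]
    rw [RCLike.inner_apply']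
    simp only [coherent]
    rw [map_div₀, map_mul, hconjA, map_pow, Complex.conj_ofReal]
    rw [mul_pow]
    field_simp
    rw [sq, hfc]
    push_cast
    ring
  rw [tsum_congr hterm, tsum_mul_left]
  have hE : Complex.exp ((starRingEnd ℂ) β * δ) =
      ∑' n : ℕ, ((starRingEnd ℂ) β * δ) ^ n / (Nat.factorial n) := by
    rw [Complex.exp_eq_exp_ℂ, NormedSpace.exp_eq_tsum_div]
  rw [← hE]


/-- For `η ∈ [0,1)`, the fidelity between the coherent states `|√η δ⟩` and `|δ⟩`
is `exp(−|δ|²(1−√η)²)`, and it tends to `0` as `|δ| → ∞`. -/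
theorem coherent_loss_fidelity (η : ℝ) (hη : η ∈ Set.Ico (0 : ℝ) 1) :
    (∀ δ : ℂ,
      ‖(inner ℂ (coherent ((Real.sqrt η : ℂ) * δ)) (coherent δ) : ℂ)‖ ^ 2 =
        Real.exp (-‖δ‖ ^ 2 * (1 - Real.sqrt η) ^ 2)) ∧
    Filter.Tendsto
      (fun δ : ℂ =>
        ‖(inner ℂ (coherent ((Real.sqrt η : ℂ) * δ)) (coherent δ) : ℂ)‖ ^ 2)
      (Filter.comap (fun z : ℂ => ‖z‖) Filter.atTop) (nhds 0) := by
  have hs0 : 0 ≤ Real.sqrt η := Real.sqrt_nonneg η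
  have hsq : Real.sqrt η ^ 2 = η := Real.sq_sqrt hη.1
  have hmain : ∀ δ : ℂ,
      ‖(inner ℂ (coherent ((Real.sqrt η : ℂ) * δ)) (coherent δ) : ℂ)‖ ^ 2 =
        Real.exp (-‖δ‖ ^ 2 * (1 - Real.sqrt η) ^ 2) := by
    intro δ
    rw [coherent_inner, ← Complex.exp_add, ← Complex.exp_add, Complex.norm_exp]
    have habs : ‖(Real.sqrt η : ℂ) * δ‖ = Real.sqrt η * ‖δ‖ := by
      rw [norm_mul, Complex.norm_real, Real.norm_eq_abs, abs_of_nonneg hs0]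
    have hre : (-(((‖(Real.sqrt η : ℂ) * δ‖) ^ 2 : ℝ) : ℂ) / 2 +
        -((‖δ‖ ^ 2 : ℝ) : ℂ) / 2 +
        (starRingEnd ℂ) ((Real.sqrt η : ℂ) * δ) * δ).re =
        -(Real.sqrt η * ‖δ‖) ^ 2 / 2 - ‖δ‖ ^ 2 / 2 +
          Real.sqrt η * ‖δ‖ ^ 2 := by
      have hcd : (starRingEnd ℂ) δ * δ = ((‖δ‖ ^ 2 : ℝ) : ℂ) := by
        rw [mul_comm, Complex.mul_conj, Complex.normSq_eq_norm_sq]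
      have h3 : (-(((‖(Real.sqrt η : ℂ) * δ‖) ^ 2 : ℝ) : ℂ) / 2 +
          -((‖δ‖ ^ 2 : ℝ) : ℂ) / 2 +
          (starRingEnd ℂ) ((Real.sqrt η : ℂ) * δ) * δ) =
          (((-(Real.sqrt η * ‖δ‖) ^ 2 / 2 - ‖δ‖ ^ 2 / 2 +
            Real.sqrt η * ‖δ‖ ^ 2 : ℝ)) : ℂ) := by
        rw [habs, map_mul, Complex.conj_ofReal, mul_assoc, hcd]
        push_cast
        ring
      rw [h3, Complex.ofReal_re]
    rw [hre, ← Real.exp_nat_mul]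
    congr 1
    push_cast
    nlinarith [hsq]
  refine ⟨hmain, ?_⟩
  have hlt : Real.sqrt η < 1 := by nlinarith [hsq, hs0, hη.2]
  have hc : 0 < (1 - Real.sqrt η) ^ 2 := pow_pos (by linarith) 2
  have h1 : Filter.Tendsto (fun x : ℝ => Real.exp (-x ^ 2 * (1 - Real.sqrt η) ^ 2))
      Filter.atTop (nhds 0) := by
    apply Real.tendsto_exp_atBot.comp
    have h2 : Filter.Tendsto (fun x : ℝ => x ^ 2 * (1 - Real.sqrt η) ^ 2)
        Filter.atTop Filter.atTop :=
      (Filter.tendsto_pow_atTop two_ne_zero).atTop_mul_const hc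
    have := Filter.tendsto_neg_atTop_atBot.comp h2
    simpa [Function.comp_def, neg_mul] using this
  simp only [hmain]
  exact h1.comp Filter.tendsto_comap
end

section
/- Let η ∈ [0, 1] and E ∈ (0, 1), and set a = √(E(1 − E)) · (1 − √η) and b = E(1 − η). Let ϱ be the real symmetric 4×4 matrix with ϱ₀₃ = ϱ₃₀ = −a, ϱ₁₁ = b, ϱ₃₃ = −b, and all other entries zero. Then the sum of the absolute values of the eigenvalues of ϱ equals E(1 − η) + (1 − √η) · √(E (4 + E(η + 2√η − 3))); equivalently, half the trace norm of ϱ equals d₁(η, E) = (1/2)[E(1 − η) + (1 − √η)√(E(4 + E(η + 2√η − 3)))]. -/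
open Polynomial Matrix in
private lemma charpoly_conj_unitary' {n : Type*} [Fintype n] [DecidableEq n]
    (U D : Matrix n n ℝ) (hU : U ∈ Matrix.unitaryGroup n ℝ) :
    (U * D * star U).charpoly = D.charpoly := by
  have h1 : (U.map C) * ((star U).map C) = 1 := by
    rw [← Matrix.map_mul, Matrix.mem_unitaryGroup_iff.mp hU]
    simp
  have hc : Commute (Matrix.scalar n (X : ℝ[X])) ((star U).map C) :=
    Matrix.scalar_commute _ (fun r' => Commute.all _ _) _
  have h2 : charmatrix (U * D * star U) = (U.map C) * charmatrix D * ((star U).map C) := by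
    rw [charmatrix, charmatrix]
    simp only [RingHom.mapMatrix_apply]
    rw [Matrix.map_mul, Matrix.map_mul, mul_sub, sub_mul, mul_assoc, mul_assoc,
      hc.eq, ← mul_assoc (U.map C), ← mul_assoc (U.map C), h1, one_mul]
  rw [Matrix.charpoly, h2, Matrix.det_mul, Matrix.det_mul, Matrix.charpoly]
  have h3 : (U.map C).det * ((star U).map C).det = 1 := by
    rw [← Matrix.det_mul, h1, Matrix.det_one]
  calc (U.map C).det * (charmatrix D).det * ((star U).map C).det
      = (charmatrix D).det * ((U.map C).det * ((star U).map C).det) := by ring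
    _ = (charmatrix D).det := by rw [h3, mul_one]

open Polynomial Matrix in
private lemma charpoly_eq_prod_eig' {m : ℕ} {A : Matrix (Fin m) (Fin m) ℝ}
    (hA : A.IsHermitian) :
    A.charpoly = ∏ i, (X - C (hA.eigenvalues i)) := by
  have hs := hA.spectral_theorem
  have hd : (RCLike.ofReal ∘ hA.eigenvalues : Fin m → ℝ) = hA.eigenvalues := by
    simp [RCLike.ofReal_real_eq_id]
  rw [hd] at hs
  have := charpoly_conj_unitary' (hA.eigenvectorUnitary : Matrix (Fin m) (Fin m) ℝ)
    (Matrix.diagonal hA.eigenvalues) (hA.eigenvectorUnitary).2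
  rw [Unitary.conjStarAlgAut_apply] at hs
  rw [← hs] at this
  rw [this, Matrix.charpoly_of_upperTriangular _ (Matrix.blockTriangular_diagonal _)]
  simp

open Polynomial Matrix in
private lemma charpoly_explicit (a b : ℝ) :
    (!![0, 0, 0, -a; 0, b, 0, 0; 0, 0, 0, 0; -a, 0, 0, -b] :
        Matrix (Fin 4) (Fin 4) ℝ).charpoly
      = X * (X - C b) * (X * X + C b * X - C (a ^ 2)) := by
  have h : charmatrix (!![0, 0, 0, -a; 0, b, 0, 0; 0, 0, 0, 0; -a, 0, 0, -b] :
        Matrix (Fin 4) (Fin 4) ℝ)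
      = !![X, 0, 0, C a; 0, X - C b, 0, 0; 0, 0, X, 0; C a, 0, 0, X + C b] := by
    ext i j
    fin_cases i <;> fin_cases j <;>
      simp [charmatrix_apply, Matrix.diagonal, Matrix.vecHead, Matrix.vecTail, sub_eq_add_neg]
  rw [Matrix.charpoly, h]
  simp [Matrix.det_succ_row_zero, Fin.sum_univ_succ, Matrix.vecHead, Matrix.vecTail,
    show Fin.succAbove (3 : Fin 4) (2 : Fin 3) = 2 from rfl]
  ring_nf

open Polynomial Matrix

/-- The trace norm (sum of absolute values of eigenvalues) of the difference
`ϱ = ρ_RA − ψ_RA` between the output of the lossy displacement approximation and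
the optimal energy-constrained input state, for `0 < E < 1`, equals
`2 d₁(η, E) = E(1−η) + (1−√η)√(E(4 + E(η + 2√η − 3)))`. -/
theorem trace_norm_displacement_difference (η E : ℝ)
    (hη : η ∈ Set.Icc (0 : ℝ) 1) (hE : E ∈ Set.Ioo (0 : ℝ) 1)
    (a b : ℝ) (ha : a = Real.sqrt (E * (1 - E)) * (1 - Real.sqrt η)) (hb : b = E * (1 - η))
    (ϱ : Matrix (Fin 4) (Fin 4) ℝ)
    (hϱ : ϱ = !![0, 0, 0, -a;
                 0, b, 0, 0;
                 0, 0, 0, 0;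
                 -a, 0, 0, -b])
    (hherm : ϱ.IsHermitian) :
    ∑ i, |hherm.eigenvalues i| =
      E * (1 - η) + (1 - Real.sqrt η) * Real.sqrt (E * (4 + E * (η + 2 * Real.sqrt η - 3))) := by
  obtain ⟨hη0, hη1⟩ := hη
  obtain ⟨hE0, hE1⟩ := hE
  have hb0 : 0 ≤ b := by rw [hb]; nlinarith
  set s : ℝ := Real.sqrt (b ^ 2 + 4 * a ^ 2) with hsdef
  have hbne : (0:ℝ) ≤ b ^ 2 + 4 * a ^ 2 := by positivity
  have hs0 : 0 ≤ s := Real.sqrt_nonneg _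
  have hs2 : s ^ 2 = b ^ 2 + 4 * a ^ 2 := Real.sq_sqrt hbne
  have hsb : b ≤ s := by
    have h1 : b = Real.sqrt (b ^ 2) := (Real.sqrt_sq hb0).symm
    rw [h1]
    exact Real.sqrt_le_sqrt (by nlinarith)
  set r₁ : ℝ := (s - b) / 2 with hr₁
  set r₂ : ℝ := (-s - b) / 2 with hr₂
  have hsum : r₁ + r₂ = -b := by rw [hr₁, hr₂]; ring
  have hprod : r₁ * r₂ = -(a ^ 2) := by
    rw [hr₁, hr₂]; linear_combination (-(1:ℝ)/4) * hs2
  -- characteristic polynomial computation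
  have hquad : (X - C r₁) * (X - C r₂) = X * X + C b * X - C (a ^ 2) := by
    have : (X - C r₁) * (X - C r₂)
        = X * X - C (r₁ + r₂) * X + C (r₁ * r₂) := by
      rw [Polynomial.C_add, Polynomial.C_mul]; ring
    rw [this, hsum, hprod, map_neg, map_neg]; ring
  have hchar : ϱ.charpoly
      = (({0, b, r₁, r₂} : Multiset ℝ).map fun x => X - C x).prod := by
    rw [hϱ, charpoly_explicit]
    simp only [Multiset.insert_eq_cons, Multiset.map_cons, Multiset.map_singleton,
      Multiset.prod_cons, Multiset.prod_singleton, map_zero]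
    rw [← hquad]; ring
  have hmul : (Finset.univ.val.map hherm.eigenvalues) = ({0, b, r₁, r₂} : Multiset ℝ) := by
    have h1 : ((Finset.univ.val.map hherm.eigenvalues).map fun x => X - C x).prod
        = (({0, b, r₁, r₂} : Multiset ℝ).map fun x => X - C x).prod := by
      rw [← hchar, charpoly_eq_prod_eig' hherm]
      rw [Finset.prod_eq_multiset_prod, Multiset.map_map]
      rfl
    have h2 := congrArg Polynomial.roots h1
    rwa [Polynomial.roots_multiset_prod_X_sub_C, Polynomial.roots_multiset_prod_X_sub_C] at h2
  -- sum of absolute values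
  have hsumabs : ∑ i, |hherm.eigenvalues i| = b + s := by
    have h3 : ∑ i, |hherm.eigenvalues i|
        = ((Finset.univ.val.map hherm.eigenvalues).map abs).sum := by
      rw [Multiset.map_map]
      rfl
    rw [h3, hmul]
    simp only [Multiset.insert_eq_cons, Multiset.map_cons, Multiset.map_singleton,
      Multiset.sum_cons, Multiset.sum_singleton]
    rw [abs_of_nonneg (le_refl (0:ℝ)), abs_of_nonneg hb0,
      abs_of_nonneg (by rw [hr₁]; linarith), abs_of_nonpos (by rw [hr₂]; linarith)]
    rw [hr₁, hr₂]; ring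
  rw [hsumabs]
  -- identify s with the closed form
  set u : ℝ := Real.sqrt η with hu
  have hu0 : 0 ≤ u := Real.sqrt_nonneg _
  have hu1 : u ≤ 1 := Real.sqrt_le_one.mpr hη1
  have hu2 : u ^ 2 = η := Real.sq_sqrt hη0
  have ha2 : a ^ 2 = E * (1 - E) * (1 - u) ^ 2 := by
    rw [ha]
    have : Real.sqrt (E * (1 - E)) ^ 2 = E * (1 - E) :=
      Real.sq_sqrt (by nlinarith)
    nlinarith [this]
  have hkey : b ^ 2 + 4 * a ^ 2 = (1 - u) ^ 2 * (E * (4 + E * (u ^ 2 + 2 * u - 3))) := by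
    rw [ha2, hb, ← hu2]; ring
  have hs_eq : s = (1 - u) * Real.sqrt (E * (4 + E * (η + 2 * u - 3))) := by
    rw [hsdef, hkey, hu2, Real.sqrt_mul (sq_nonneg _), Real.sqrt_sq (by linarith)]
  rw [hs_eq, hb]
end

section
/- For all z > 0 and c > 0, the Gaussian overlap integral satisfies 2π · ∫_{ℝ²} (1/π) exp(−x²/z − z p²) · (1/(π √((z + c)/z))) exp(−x²/(z + c) − z p²) dx dp = √(2z / (2z + c)); moreover, for fixed c > 0, √(2z/(2z + c)) tends to 0 as z → 0 from above. -/
open Real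

/-- The Gaussian overlap integral giving the fidelity between a squeezed vacuum
state and its image under the residual channel `Ξ^{η,r_E}` equals `√(2z/(2z+c))`,
which tends to `0` as `z → 0⁺` for fixed `c > 0`. -/
theorem squeezed_vacuum_fidelity (c : ℝ) (hc : 0 < c) :
    (∀ z : ℝ, 0 < z →
      2 * Real.pi *
        ∫ x : ℝ, ∫ p : ℝ,
          (1 / Real.pi) * Real.exp (-x ^ 2 / z - z * p ^ 2) *
            ((1 / (Real.pi * Real.sqrt ((z + c) / z))) *
              Real.exp (-x ^ 2 / (z + c) - z * p ^ 2)) =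
        Real.sqrt (2 * z / (2 * z + c))) ∧
    Filter.Tendsto (fun z : ℝ => Real.sqrt (2 * z / (2 * z + c)))
      (nhdsWithin 0 (Set.Ioi 0)) (nhds 0) := by
  constructor
  · intro z hz
    have hzc : 0 < z + c := by linarith
    have hπ : (0:ℝ) < Real.pi := Real.pi_pos
    set a : ℝ := 1 / z + 1 / (z + c) with ha
    have ha_pos : 0 < a := by positivity
    set s : ℝ := Real.sqrt ((z + c) / z) with hs
    have hs_pos : 0 < s := Real.sqrt_pos.mpr (by positivity)
    have hs_sq : s ^ 2 = (z + c) / z := Real.sq_sqrt (by positivity)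
    have key : ∀ x p : ℝ,
        (1 / Real.pi) * Real.exp (-x ^ 2 / z - z * p ^ 2) *
          ((1 / (Real.pi * s)) * Real.exp (-x ^ 2 / (z + c) - z * p ^ 2)) =
        (1 / (Real.pi ^ 2 * s)) * Real.exp (-a * x ^ 2) *
          Real.exp (-(2 * z) * p ^ 2) := by
      intro x p
      have h1 : (-x ^ 2 / z - z * p ^ 2) + (-x ^ 2 / (z + c) - z * p ^ 2) =
          -a * x ^ 2 + -(2 * z) * p ^ 2 := by
        rw [ha]; field_simp; ring
      calc (1 / Real.pi) * Real.exp (-x ^ 2 / z - z * p ^ 2) *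
          ((1 / (Real.pi * s)) * Real.exp (-x ^ 2 / (z + c) - z * p ^ 2))
          = (1 / Real.pi * (1 / (Real.pi * s))) *
            Real.exp ((-x ^ 2 / z - z * p ^ 2) + (-x ^ 2 / (z + c) - z * p ^ 2)) := by
            rw [Real.exp_add]; ring
        _ = (1 / (Real.pi ^ 2 * s)) * Real.exp (-a * x ^ 2) *
            Real.exp (-(2 * z) * p ^ 2) := by
            rw [h1, Real.exp_add]; field_simp
    simp only [key]
    have hp_int : ∀ x : ℝ,
        (∫ p : ℝ, (1 / (Real.pi ^ 2 * s)) * Real.exp (-a * x ^ 2) *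
          Real.exp (-(2 * z) * p ^ 2)) =
        (1 / (Real.pi ^ 2 * s)) * Real.exp (-a * x ^ 2) *
          Real.sqrt (Real.pi / (2 * z)) := by
      intro x
      rw [MeasureTheory.integral_const_mul, integral_gaussian]
    simp only [hp_int]
    have hx_int :
        (∫ x : ℝ, (1 / (Real.pi ^ 2 * s)) * Real.exp (-a * x ^ 2) *
          Real.sqrt (Real.pi / (2 * z))) =
        (1 / (Real.pi ^ 2 * s)) * Real.sqrt (Real.pi / a) *
          Real.sqrt (Real.pi / (2 * z)) := by
      have : ∀ x : ℝ, (1 / (Real.pi ^ 2 * s)) * Real.exp (-a * x ^ 2) *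
          Real.sqrt (Real.pi / (2 * z)) =
          ((1 / (Real.pi ^ 2 * s)) * Real.sqrt (Real.pi / (2 * z))) *
            Real.exp (-a * x ^ 2) := by intro x; ring
      simp only [this]
      rw [MeasureTheory.integral_const_mul, integral_gaussian]
      ring
    rw [hx_int]
    -- now prove the algebraic identity
    set S : ℝ := 2 * Real.pi * ((1 / (Real.pi ^ 2 * s)) * Real.sqrt (Real.pi / a) *
      Real.sqrt (Real.pi / (2 * z))) with hS
    have hS_nonneg : 0 ≤ S := by positivity
    have hsq : S ^ 2 = 2 * z / (2 * z + c) := by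
      have h1 : Real.sqrt (Real.pi / a) ^ 2 = Real.pi / a :=
        Real.sq_sqrt (by positivity)
      have h2 : Real.sqrt (Real.pi / (2 * z)) ^ 2 = Real.pi / (2 * z) :=
        Real.sq_sqrt (by positivity)
      have : S ^ 2 = (2 * Real.pi) ^ 2 * ((1 / (Real.pi ^ 2 * s)) ^ 2 *
          (Real.sqrt (Real.pi / a) ^ 2) * (Real.sqrt (Real.pi / (2 * z)) ^ 2)) := by
        rw [hS]; ring
      rw [this, h1, h2]
      have hss : (1 / (Real.pi ^ 2 * s)) ^ 2 = 1 / (Real.pi ^ 4 * ((z + c) / z)) := by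
        rw [div_pow, mul_pow, hs_sq]; ring
      rw [hss, ha]
      field_simp
      ring
    calc S = Real.sqrt (S ^ 2) := by rw [Real.sqrt_sq hS_nonneg]
    _ = Real.sqrt (2 * z / (2 * z + c)) := by rw [hsq]
  · have hcont : ContinuousAt (fun z : ℝ => Real.sqrt (2 * z / (2 * z + c))) 0 := by
      apply Real.continuous_sqrt.continuousAt.comp
      exact ContinuousAt.div (by fun_prop) (by fun_prop) (by simpa using hc.ne')
    have h := hcont.tendsto.mono_left
      (nhdsWithin_le_nhds : nhdsWithin (0:ℝ) (Set.Ioi 0) ≤ nhds 0)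
    simpa using h
end
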